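/- If λ = m₁γ₁ + m₂γ₂ with both m₁ and m₂ odd, then for every element w of the Weyl group of G₂, writing w·λ = w(λ+ρ) − ρ = m₁'γ₁ + m₂'γ₂ in the fundamental weight basis, at least one of m₁', m₂' is odd. -/

import Mathlib

namespace G2

/-- The weight/root lattice of G₂ in coordinates: `(c₁, c₂)` represents `c₁α₁ + c₂α₂`,
where `α₁` is the short simple root and `α₂` is the long simple root. -/
def α1 : ℚ × ℚ := (1, 0)
def α2 : ℚ × ℚ := (0, 1)

/-- The simple reflection `s₁`: `s₁(α₁) = -α₁`, `s₁(α₂) = 3α₁ + α₂`. -/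
def s1fun : ℚ × ℚ → ℚ × ℚ := fun p => (-p.1 + 3 * p.2, p.2)
/-- The simple reflection `s₂`: `s₂(α₁) = α₁ + α₂`, `s₂(α₂) = -α₂`. -/
def s2fun : ℚ × ℚ → ℚ × ℚ := fun p => (p.1, p.1 - p.2)

lemma s1_invol : Function.Involutive s1fun := by
  intro p; rw [Prod.ext_iff]; constructor <;> simp [s1fun]

lemma s2_invol : Function.Involutive s2fun := by
  intro p; rw [Prod.ext_iff]; constructor <;> simp [s2fun]

/-- The simple reflections as permutations of the weight space. -/
def σ1 : Equiv.Perm (ℚ × ℚ) := Function.Involutive.toPerm s1fun s1_invol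
def σ2 : Equiv.Perm (ℚ × ℚ) := Function.Involutive.toPerm s2fun s2_invol

/-- The Weyl group of G₂, generated by the two simple reflections. -/
def W : Subgroup (Equiv.Perm (ℚ × ℚ)) := Subgroup.closure {σ1, σ2}

/-- Word length with respect to the simple reflections `s₁`, `s₂`. -/
noncomputable def len (w : Equiv.Perm (ℚ × ℚ)) : ℕ :=
  sInf {n | ∃ l : List (Equiv.Perm (ℚ × ℚ)),
    l.length = n ∧ (∀ x ∈ l, x = σ1 ∨ x = σ2) ∧ l.prod = w}

/-- `ρ = 5α₁ + 3α₂`, the half sum of positive roots. -/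
def ρv : ℚ × ℚ := (5, 3)
/-- The fundamental weight `γ₁ = 2α₁ + α₂`. -/
def γ1 : ℚ × ℚ := (2, 1)
/-- The fundamental weight `γ₂ = 3α₁ + 2α₂`. -/
def γ2 : ℚ × ℚ := (3, 2)

/-- The dot action `w · λ = w(λ + ρ) - ρ`. -/
def dot (w : Equiv.Perm (ℚ × ℚ)) (μ : ℚ × ℚ) : ℚ × ℚ := w (μ + ρv) - ρv

/-- The positive roots of G₂. -/
def Φplus : Set (ℚ × ℚ) :=
  {α1, α2, α1 + α2, (2 : ℚ) • α1 + α2, (3 : ℚ) • α1 + α2, (3 : ℚ) • α1 + (2 : ℚ) • α2}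

/-- The negative roots of G₂. -/
def Φminus : Set (ℚ × ℚ) := (fun p => -p) '' Φplus

/-- `γ^{M₁} = α₁/2`. -/
def γM1 : ℚ × ℚ := (1/2, 0)
/-- `κ^{M₁} = γ₂/2`. -/
def κM1 : ℚ × ℚ := (3/2, 1)
/-- `γ^{M₂} = α₂/2`. -/
def γM2 : ℚ × ℚ := (0, 1/2)
/-- `κ^{M₂} = γ₁/2`. -/
def κM2 : ℚ × ℚ := (1, 1/2)

/-- Kostant representatives for the maximal parabolic `P₁`. -/
def WP1 : Set (Equiv.Perm (ℚ × ℚ)) :=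
  {1, σ2, σ2 * σ1, σ2 * σ1 * σ2, σ2 * σ1 * σ2 * σ1, σ2 * σ1 * σ2 * σ1 * σ2}

/-- Kostant representatives for the maximal parabolic `P₂`. -/
def WP2 : Set (Equiv.Perm (ℚ × ℚ)) :=
  {1, σ1, σ1 * σ2, σ1 * σ2 * σ1, σ1 * σ2 * σ1 * σ2, σ1 * σ2 * σ1 * σ2 * σ1}

/-- Even integer lattice points. -/
def Evn (v : ℚ × ℚ) : Prop := ∃ x y : ℤ, v.1 = 2 * (x : ℚ) ∧ v.2 = 2 * (y : ℚ)

lemma evn_s1 : ∀ v, Evn v → Evn (σ1 v) := by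
  rintro v ⟨a, b, h1, h2⟩
  refine ⟨-a + 3 * b, b, ?_, ?_⟩ <;>
    simp [σ1, Function.Involutive.toPerm, s1fun, h1, h2] <;> push_cast <;> ring

lemma evn_s2 : ∀ v, Evn v → Evn (σ2 v) := by
  rintro v ⟨a, b, h1, h2⟩
  refine ⟨a, a - b, ?_, ?_⟩ <;>
    simp [σ2, Function.Involutive.toPerm, s2fun, h1, h2] <;> push_cast <;> ring

lemma evn_iff_of_mem_W : ∀ w ∈ W, ∀ v, Evn v ↔ Evn (w v) := by
  intro w hw
  refine Subgroup.closure_induction (p := fun w _ => ∀ v, Evn v ↔ Evn (w v))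
    ?_ (by simp) ?_ ?_ hw
  · rintro x (rfl | rfl) v
    · refine ⟨evn_s1 v, fun h => ?_⟩
      have := evn_s1 _ h
      rwa [show σ1 (σ1 v) = v from s1_invol v] at this
    · refine ⟨evn_s2 v, fun h => ?_⟩
      have := evn_s2 _ h
      rwa [show σ2 (σ2 v) = v from s2_invol v] at this
  · intro x y _ _ hx hy v
    rw [hy v, hx (y v)]
    simp
  · intro x _ hx v
    have := hx (x⁻¹ v)
    simp at this
    rw [← this]
    exact Iff.rfl

/-- If `λ = m₁γ₁ + m₂γ₂` with `m₁, m₂` both odd, then for every Weyl group element `w`,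
writing `w·λ = m₁'γ₁ + m₂'γ₂`, at least one of `m₁', m₂'` is odd. -/
theorem g2_parity_odd_odd (m₁ m₂ : ℤ) (h₁ : Odd m₁) (h₂ : Odd m₂) :
    ∀ w ∈ W, ∀ a b : ℚ,
      dot w ((m₁ : ℚ) • γ1 + (m₂ : ℚ) • γ2) = a • γ1 + b • γ2 →
      (∃ k : ℤ, a = 2 * k + 1) ∨ (∃ k : ℤ, b = 2 * k + 1) := by
  obtain ⟨k, hk⟩ := h₁
  obtain ⟨l, hl⟩ := h₂
  intro w hw a b heq
  have hE : Evn ((m₁ : ℚ) • γ1 + (m₂ : ℚ) • γ2 + ρv) := by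
    refine ⟨2 * k + 3 * l + 5, k + 2 * l + 3, ?_, ?_⟩ <;>
      · simp [γ1, γ2, ρv, hk, hl]
        push_cast
        ring
  obtain ⟨x, y, hx, hy⟩ := (evn_iff_of_mem_W w hw _).mp hE
  unfold dot at heq
  have h1 := congrArg Prod.fst heq
  have h2 := congrArg Prod.snd heq
  rw [Prod.fst_sub, hx] at h1
  rw [Prod.snd_sub, hy] at h2
  simp [γ1, γ2, ρv] at h1 h2
  refine Or.inl ⟨2 * x - 3 * y - 1, ?_⟩
  push_cast
  linarith

end G2
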